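/- Let A be a commutative ring, I and J comaximal ideals, F₁, F₂ finite free A-modules of the same rank n, with surjections φ₁ : F₁ ↠ I and φ₂ : F₂ ↠ J. Then there is a surjection F ↠ I·J/(I²J²) factoring the free module F = A^n onto I·J modulo (IJ)², i.e., there exists an A-linear map φ̄ : A^n → I·J/(I·J)² which is surjective. -/

import Mathlib

/-- for comaximal ideals `I, J` with surjections `φ₁ : A^n ↠ I`,
`φ₂ : A^n ↠ J`, there is a surjective `A`-linear map `A^n → I·J/(I·J)²`. -/
theorem stmt8 {A : Type*} [CommRing A] (I J : Ideal A) (hcom : I ⊔ J = ⊤) (n : ℕ)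
    (φ₁ : (Fin n → A) →ₗ[A] A) (hφ₁ : LinearMap.range φ₁ = I)
    (φ₂ : (Fin n → A) →ₗ[A] A) (hφ₂ : LinearMap.range φ₂ = J) :
    ∃ φBar : (Fin n → A) →ₗ[A]
        (↥(I * J) ⧸ (Submodule.comap (I * J).subtype ((I * J) ^ 2) : Submodule A ↥(I * J))),
      Function.Surjective φBar := by
  have h1 : (1 : A) ∈ I ⊔ J := by rw [hcom]; trivial
  obtain ⟨e, he, f, hf, hef⟩ := Submodule.mem_sup.mp h1
  set ψ : (Fin n → A) →ₗ[A] A := f ^ 2 • φ₁ + e ^ 2 • φ₂ with hψdef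
  have hψ : ∀ v, ψ v = f ^ 2 * φ₁ v + e ^ 2 * φ₂ v := by
    intro v; simp [hψdef, smul_eq_mul]
  have hmem : ∀ v, ψ v ∈ I * J := by
    intro v
    rw [hψ]
    have h1 : φ₁ v ∈ I := hφ₁ ▸ LinearMap.mem_range_self φ₁ v
    have h2 : φ₂ v ∈ J := hφ₂ ▸ LinearMap.mem_range_self φ₂ v
    have t1 : f ^ 2 * φ₁ v ∈ I * J := by
      have := Ideal.mul_mem_left (I * J) f (Ideal.mul_mem_mul h1 hf)
      convert this using 1; ring
    have t2 : e ^ 2 * φ₂ v ∈ I * J := by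
      have := Ideal.mul_mem_left (I * J) e (Ideal.mul_mem_mul he h2)
      convert this using 1; ring
    exact Ideal.add_mem _ t1 t2
  set ψ' : (Fin n → A) →ₗ[A] ↥(I * J) := LinearMap.codRestrict _ ψ hmem with hψ'def
  refine ⟨(Submodule.mkQ _).comp ψ', ?_⟩
  intro y
  obtain ⟨x, rfl⟩ := Submodule.mkQ_surjective _ y
  have hxI : (x : A) ∈ I := Ideal.mul_le_left (I := I) (J := J) x.2
  have hxJ : (x : A) ∈ J := Ideal.mul_le_right (I := I) (J := J) x.2
  obtain ⟨v₁, hv₁⟩ : (x : A) ∈ LinearMap.range φ₁ := hφ₁ ▸ hxI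
  obtain ⟨v₂, hv₂⟩ : (x : A) ∈ LinearMap.range φ₂ := hφ₂ ▸ hxJ
  refine ⟨f • v₁ + e • v₂, ?_⟩
  simp only [LinearMap.comp_apply, Submodule.mkQ_apply]
  rw [Submodule.Quotient.eq]
  rw [Submodule.mem_comap]
  have hcoe : ((ψ' (f • v₁ + e • v₂) - x : ↥(I * J)) : A)
      = ψ (f • v₁ + e • v₂) - (x : A) := by
    simp [hψ'def]
  rw [Submodule.subtype_apply, hcoe]
  have hval : ψ (f • v₁ + e • v₂) - (x : A)
      = -(3 * ((e * f) * ((x : A)))) + (e * f) * (φ₁ v₂ * f) + (e * f) * (e * φ₂ v₁) := by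
    rw [hψ]
    simp only [map_add, map_smul, smul_eq_mul, hv₁, hv₂]
    linear_combination ((x : A) * (e ^ 2 - e * f + f ^ 2 + e + f + 1)) * hef
  rw [hval]
  have hef' : e * f ∈ I * J := Ideal.mul_mem_mul he hf
  have hsq : (I * J) ^ 2 = (I * J) * (I * J) := sq (I * J)
  rw [hsq]
  have m1 : -(3 * ((e * f) * (x : A))) ∈ (I * J) * (I * J) := by
    exact neg_mem (Ideal.mul_mem_left _ 3 (Ideal.mul_mem_mul hef' x.2))
  have m2 : (e * f) * (φ₁ v₂ * f) ∈ (I * J) * (I * J) := by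
    have hφ₁v₂ : φ₁ v₂ ∈ I := hφ₁ ▸ LinearMap.mem_range_self φ₁ v₂
    exact Ideal.mul_mem_mul hef' (Ideal.mul_mem_mul hφ₁v₂ hf)
  have m3 : (e * f) * (e * φ₂ v₁) ∈ (I * J) * (I * J) := by
    have hφ₂v₁ : φ₂ v₁ ∈ J := hφ₂ ▸ LinearMap.mem_range_self φ₂ v₁
    exact Ideal.mul_mem_mul hef' (Ideal.mul_mem_mul he hφ₂v₁)
  exact add_mem (add_mem m1 m2) m3
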